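/- Let K be a valued field with a tower of complements (A[Λ]), and let a ∈ K with v(a) = 0 and a ≠ 0. Set Λ := ℤ·μ(a) := sup_n n·μ(a). Then μ(1/a) ≤ Λ, i.e., 1/a ∈ A[Λ]. -/

import Mathlib

set_option autoImplicit false

universe u v

/-- A Dedekind cut of a linearly ordered abelian group, represented by its left part
(`L = Λ^L`); the right part is the complement of `L`.  The cuts `-∞` (`L = ∅`) and
`+∞` (`L = G`) are included. -/
structure Cut (G : Type u) [AddCommGroup G] [LinearOrder G] [IsOrderedAddMonoid G] : Type u where
  L : Set G
  lower : ∀ ⦃x y : G⦄, y ∈ L → x ≤ y → x ∈ L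

namespace Cut

variable {G : Type u} [AddCommGroup G] [LinearOrder G] [IsOrderedAddMonoid G]

/-- Cuts are ordered by inclusion of left parts. -/
instance : PartialOrder (Cut G) where
  le Λ Γ := Λ.L ⊆ Γ.L
  le_refl _ := subset_rfl
  le_trans _ _ _ h h' := fun x hx => h' (h hx)
  le_antisymm := by
    rintro ⟨L₁, h₁⟩ ⟨L₂, h₂⟩ h h'
    simpa using Set.Subset.antisymm h h'

/-- `γ⁻`, the cut with left part `(-∞, γ)`. -/
def lcut (γ : G) : Cut G := ⟨{x | x < γ}, fun _ _ hy hxy => lt_of_le_of_lt hxy hy⟩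

/-- `γ⁺`, the cut with left part `(-∞, γ]`. -/
def rcut (γ : G) : Cut G := ⟨{x | x ≤ γ}, fun _ _ hy hxy => le_trans hxy hy⟩

/-- The left sum of cuts: the smallest cut whose left part contains all `λ + γ`
with `λ < Λ`, `γ < Γ`. -/
instance : Add (Cut G) :=
  ⟨fun Λ Γ => ⟨{x | ∃ l ∈ Λ.L, ∃ g ∈ Γ.L, x ≤ l + g}, by
    rintro x y ⟨l, hl, g, hg, hy⟩ hxy
    exact ⟨l, hl, g, hg, hxy.trans hy⟩⟩⟩

/-- The right sum of cuts: the largest cut whose right part contains all `λ + γ`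
with `λ > Λ`, `γ > Γ`. -/
def addR (Λ Γ : Cut G) : Cut G :=
  ⟨{x | ∀ l ∉ Λ.L, ∀ g ∉ Γ.L, x < l + g}, by
    intro x y hy hxy l hl g hg
    exact lt_of_le_of_lt hxy (hy l hl g hg)⟩

/-- The right difference of cuts: the largest cut whose right part contains all
`λ − γ` with `λ > Λ`, `γ < Γ`. -/
def sub (Λ Γ : Cut G) : Cut G :=
  ⟨{x | ∀ l ∉ Λ.L, ∀ g ∈ Γ.L, x < l - g}, by
    intro x y hy hxy l hl g hg
    exact lt_of_le_of_lt hxy (hy l hl g hg)⟩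

/-- Translation `γ + Λ` of a cut by a group element, with left part `{γ + λ : λ ∈ Λ^L}`. -/
def transl (γ : G) (Λ : Cut G) : Cut G :=
  ⟨(fun x => γ + x) '' Λ.L, by
    rintro x y ⟨l, hl, rfl⟩ hxy
    exact ⟨x - γ, Λ.lower hl (sub_le_iff_le_add'.mpr hxy), by show γ + (x - γ) = x; rw [add_comm, sub_add_cancel]⟩⟩

/-- Negation of a cut: `-Λ = (-Λ^R, -Λ^L)`. -/
def neg (Λ : Cut G) : Cut G :=
  ⟨{x | -x ∉ Λ.L}, by
    intro x y hy hxy hx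
    exact hy (Λ.lower hx (neg_le_neg hxy))⟩

/-- The `n`-fold left sum `Λ + Γ + ⋯ + Γ` (`Γ` added `n` times). -/
def addn (Λ Γ : Cut G) : ℕ → Cut G
  | 0 => Λ
  | n + 1 => addn Λ Γ n + Γ

/-- The `n`-fold right difference `Λ − Γ − ⋯ − Γ` (`Γ` subtracted `n` times). -/
def subn (Λ Γ : Cut G) : ℕ → Cut G
  | 0 => Λ
  | n + 1 => (subn Λ Γ n).sub Γ

/-- `nΓ = Γ + ⋯ + Γ` (`n` times); by convention `0 • Γ = 0⁺`, the neutral element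
of the left sum. -/
def nsmul : ℕ → Cut G → Cut G
  | 0, _ => rcut 0
  | 1, Γ => Γ
  | n + 2, Γ => nsmul (n + 1) Γ + Γ

/-- `ℤ`-multiples of a cut: `(-n)Γ := -(nΓ)`. -/
def zsmul (n : ℤ) (Γ : Cut G) : Cut G :=
  if 0 ≤ n then nsmul n.toNat Γ else (nsmul (-n).toNat Γ).neg

/-- `ℤΓ := sup {nΓ : n ∈ ℤ}`. -/
def zmul (Γ : Cut G) : Cut G :=
  ⟨⋃ n : ℤ, (zsmul n Γ).L, by
    intro x y hy hxy
    rcases Set.mem_iUnion.1 hy with ⟨n, hn⟩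
    exact Set.mem_iUnion.2 ⟨n, (zsmul n Γ).lower hn hxy⟩⟩

/-- `S⁺`: the smallest cut whose left part contains the set `S`. -/
def ofSet (s : Set G) : Cut G :=
  ⟨{x | ∃ γ ∈ s, x ≤ γ}, by
    rintro x y ⟨γ, hγ, hy⟩ hxy
    exact ⟨γ, hγ, hxy.trans hy⟩⟩

/-- The supremum (maximum) of two cuts. -/
def max (Λ Γ : Cut G) : Cut G :=
  ⟨Λ.L ∪ Γ.L, by
    rintro x y (hy | hy) hxy
    · exact Or.inl (Λ.lower hy hxy)
    · exact Or.inr (Γ.lower hy hxy)⟩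

/-- The infimum of a set of cuts. -/
def inf (s : Set (Cut G)) : Cut G :=
  ⟨{x | ∀ Λ ∈ s, x ∈ Λ.L}, by
    intro x y hy hxy Λ hΛ
    exact Λ.lower (hy Λ hΛ) hxy⟩

end Cut

/-- A valued field `K` (of equal characteristic) with value group `G`, a value group
section `t`, and an embedded residue field `k ⊆ K` (the residue field section is the
inclusion). The valuation is written additively, with `v 0 = ⊤`. -/
structure VData (K : Type u) (G : Type v) [Field K] [AddCommGroup G] [LinearOrder G] [IsOrderedAddMonoid G] where
  v : K → WithTop G
  k : Subfield K
  t : G → K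
  v_eq_top : ∀ x : K, v x = ⊤ ↔ x = 0
  v_mul : ∀ x y : K, v (x * y) = v x + v y
  v_sub : ∀ x y : K, min (v x) (v y) ≤ v (x - y)
  v_surj : ∀ γ : G, ∃ x : K, v x = (γ : WithTop G)
  v_t : ∀ γ : G, v (t γ) = (γ : WithTop G)
  t_neg : ∀ γ : G, t (-γ) = (t γ)⁻¹
  v_k : ∀ c ∈ k, c ≠ 0 → v c = (0 : WithTop G)
  k_res : ∀ x : K, v x = (0 : WithTop G) → ∃ c ∈ k, (0 : WithTop G) < v (x - c)

namespace VData

variable {K : Type u} {G : Type v} [Field K] [AddCommGroup G] [LinearOrder G] [IsOrderedAddMonoid G]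

/-- `O[Λ] = {x ∈ K : v(x) > Λ}`, the (possibly fractional) ideal of the valuation
ring associated with the cut `Λ`. -/
def Oc (S : VData K G) (Λ : Cut G) : Set K :=
  {x | ∀ γ : G, S.v x = (γ : WithTop G) → γ ∉ Λ.L}

/-- `O_R[Λ] = {x ∈ R : v(x) > Λ}`, for a subring `R` of `K`. -/
def OcR (S : VData K G) (R : Subring K) (Λ : Cut G) : Set K :=
  {x | x ∈ R ∧ ∀ γ : G, S.v x = (γ : WithTop G) → γ ∉ Λ.L}

end VData

/-- Axioms CA–CD of a (weak) tower of complements for the valued field `K`: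
each `A[Λ]` is a `k`-subspace of `K` (CA), `A[Λ] ⊕ O[Λ] = K` (CB),
`t(γ)·k ⊆ A[γ⁺]` (CC), and `Γ ≤ Λ ↔ A[Γ] ⊆ A[Λ]` (CD). -/
structure TowerBase {K : Type u} {G : Type v} [Field K] [AddCommGroup G] [LinearOrder G] [IsOrderedAddMonoid G]
    (S : VData K G) where
  A : Cut G → Set K
  zero_mem : ∀ Λ : Cut G, (0 : K) ∈ A Λ
  add_mem : ∀ Λ : Cut G, ∀ x ∈ A Λ, ∀ y ∈ A Λ, x + y ∈ A Λ
  smul_mem : ∀ Λ : Cut G, ∀ c ∈ S.k, ∀ x ∈ A Λ, c * x ∈ A Λ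
  disj : ∀ Λ : Cut G, ∀ x ∈ A Λ, x ∈ S.Oc Λ → x = 0
  spans : ∀ Λ : Cut G, ∀ x : K, ∃ a ∈ A Λ, ∃ o ∈ S.Oc Λ, x = a + o
  sec_mem : ∀ γ : G, ∀ c ∈ S.k, c * S.t γ ∈ A (Cut.rcut γ)
  mono : ∀ Γ Λ : Cut G, Γ ≤ Λ ↔ A Γ ⊆ A Λ

/-- A weak tower of complements: CA–CD together with CF (`A[γ+Λ] = t(γ)·A[Λ]`). -/
structure WeakTower {K : Type u} {G : Type v} [Field K] [AddCommGroup G] [LinearOrder G] [IsOrderedAddMonoid G]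
    (S : VData K G) extends TowerBase S where
  transl_eq : ∀ (γ : G) (Λ : Cut G),
    A (Cut.transl γ Λ) = (fun x => S.t γ * x) '' A Λ

/-- A tower of complements: CA–CD together with the multiplicativity axiom CE
(`A[Λ]·A[Γ] ⊆ A[Λ+Γ]`). -/
structure Tower {K : Type u} {G : Type v} [Field K] [AddCommGroup G] [LinearOrder G] [IsOrderedAddMonoid G]
    (S : VData K G) extends TowerBase S where
  mul_mem : ∀ Λ Γ : Cut G, ∀ x ∈ A Λ, ∀ y ∈ A Γ, x * y ∈ A (Λ + Γ)

/-- Axioms CA–CD of a (weak) tower of complements for a subring `R` of `K`. -/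
structure RTowerBase {K : Type u} {G : Type v} [Field K] [AddCommGroup G] [LinearOrder G] [IsOrderedAddMonoid G]
    (S : VData K G) (R : Subring K) where
  A : Cut G → Set K
  subset_R : ∀ Λ : Cut G, A Λ ⊆ (R : Set K)
  zero_mem : ∀ Λ : Cut G, (0 : K) ∈ A Λ
  add_mem : ∀ Λ : Cut G, ∀ x ∈ A Λ, ∀ y ∈ A Λ, x + y ∈ A Λ
  smul_mem : ∀ Λ : Cut G, ∀ c ∈ S.k, ∀ x ∈ A Λ, c * x ∈ A Λ
  disj : ∀ Λ : Cut G, ∀ x ∈ A Λ, x ∈ S.OcR R Λ → x = 0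
  spans : ∀ Λ : Cut G, ∀ x ∈ R, ∃ a ∈ A Λ, ∃ o ∈ S.OcR R Λ, x = a + o
  sec_mem : ∀ γ : G, ∀ c ∈ S.k, c * S.t γ ∈ A (Cut.rcut γ)
  mono : ∀ Γ Λ : Cut G, Γ ≤ Λ ↔ A Γ ⊆ A Λ

/-- A weak tower of complements for a subring `R` of `K`: CA–CD together with CF. -/
structure RWeakTower {K : Type u} {G : Type v} [Field K] [AddCommGroup G] [LinearOrder G] [IsOrderedAddMonoid G]
    (S : VData K G) (R : Subring K) extends RTowerBase S R where
  transl_eq : ∀ (γ : G) (Λ : Cut G),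
    A (Cut.transl γ Λ) = (fun x => S.t γ * x) '' A Λ

namespace RTowerBase

variable {K : Type u} {G : Type v} [Field K] [AddCommGroup G] [LinearOrder G] [IsOrderedAddMonoid G]
  {S : VData K G} {R : Subring K}

/-- The support of `x ∈ R` with respect to a (weak) tower of complements:
`γ ∈ supp x` iff the coefficient `a_γ(x)` in the decomposition
`x = x₁ + a_γ(x) t(γ) + x₃` (with `x₁ ∈ A[γ⁻]`, `v(x₃) > γ`) is nonzero, i.e.
iff `x ∉ A[γ⁻] + O[γ⁺]`. -/
def supp (T : RTowerBase S R) (x : K) : Set G :=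
  {γ | ¬ ∃ a ∈ T.A (Cut.lcut γ), ∃ o ∈ S.OcR R (Cut.rcut γ), x = a + o}

/-- `μ(x) := (supp x)⁺`, the smallest cut whose left part contains the support. -/
def mu (T : RTowerBase S R) (x : K) : Cut G :=
  Cut.ofSet (T.supp x)

end RTowerBase

namespace TowerBase

variable {K : Type u} {G : Type v} [Field K] [AddCommGroup G] [LinearOrder G] [IsOrderedAddMonoid G]
  {S : VData K G}

/-- `μ(x) := inf {Λ : x ∈ A[Λ]}`. -/
def muInf (T : TowerBase S) (x : K) : Cut G :=
  Cut.inf {Λ | x ∈ T.A Λ}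

end TowerBase

namespace RTowerBase

variable {K : Type u} {G : Type v} [Field K] [AddCommGroup G] [LinearOrder G] [IsOrderedAddMonoid G]
  {S : VData K G} {R : Subring K}

/-- `μ(x) := inf {Λ : x ∈ A[Λ]}`. -/
def muInf (T : RTowerBase S R) (x : K) : Cut G :=
  Cut.inf {Λ | x ∈ T.A Λ}

end RTowerBase

section Aux

variable {K : Type u} {G : Type v} [Field K] [AddCommGroup G] [LinearOrder G] [IsOrderedAddMonoid G]
  {S : VData K G}

/-- `A[Λ]` is closed under subtraction. -/
lemma TowerBase.sub_mem (T : TowerBase S) (Λ : Cut G) {x y : K}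
    (hx : x ∈ T.A Λ) (hy : y ∈ T.A Λ) : x - y ∈ T.A Λ := by
  have h : x - y = x + (-1 : K) * y := by ring
  rw [h]
  exact T.add_mem Λ x hx _ (T.smul_mem Λ (-1) (S.k.neg_mem S.k.one_mem) y hy)

/-- Every element lies in the complement at its own `μ`. -/
lemma TowerBase.mem_A_muInf (T : TowerBase S) (x : K) : x ∈ T.A (T.muInf x) := by
  obtain ⟨a1, ha1, δ, hδ, hx⟩ := T.spans (T.muInf x) x
  rcases eq_or_ne δ 0 with rfl | hδ0
  · rw [add_zero] at hx; subst hx; exact ha1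
  · exfalso
    have hvδ : S.v δ ≠ ⊤ := fun h => hδ0 ((S.v_eq_top δ).1 h)
    obtain ⟨d, hd⟩ : ∃ d : G, S.v δ = (d : WithTop G) := by
      rcases WithTop.ne_top_iff_exists.1 hvδ with ⟨d, hd⟩
      exact ⟨d, hd.symm⟩
    have hdL : d ∉ (T.muInf x).L := hδ d hd
    have hexΓ : ∃ Γ : Cut G, x ∈ T.A Γ ∧ d ∉ Γ.L := by
      by_contra h
      push_neg at h
      exact hdL fun Γ hΓ => h Γ hΓ
    obtain ⟨Γ, hxΓ, hdΓ⟩ := hexΓ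
    have hΓle : Γ ≤ Cut.lcut d := by
      intro y hy
      by_contra hyd
      exact hdΓ (Γ.lower hy (le_of_not_gt hyd))
    have hmule : T.muInf x ≤ Cut.lcut d :=
      le_trans (fun y hy => hy Γ hxΓ) hΓle
    have hxA : x ∈ T.A (Cut.lcut d) := (T.mono Γ _).1 hΓle hxΓ
    have ha1A : a1 ∈ T.A (Cut.lcut d) := (T.mono _ _).1 hmule ha1
    have hδA : δ ∈ T.A (Cut.lcut d) := by
      have h : δ = x - a1 := by rw [hx]; ring
      rw [h]; exact T.sub_mem _ hxA ha1A
    have hδO : δ ∈ S.Oc (Cut.lcut d) := by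
      intro γ hγ
      have hgd : γ = d := WithTop.coe_injective (by rw [← hγ, hd])
      subst hgd
      exact fun h => lt_irrefl γ h
    exact hδ0 (T.disj _ δ hδA hδO)

/-- `0` is in the left part of any cut whose complement contains a unit `a`. -/
lemma zero_mem_muInf_L (T : TowerBase S) {a : K} (ha : a ≠ 0)
    (hva : S.v a = (0 : WithTop G)) : (0 : G) ∈ (T.muInf a).L := by
  intro Γ hΓ
  by_contra h0
  refine ha (T.disj Γ a hΓ ?_)
  intro γ hγ
  have : γ = (0 : G) := WithTop.coe_injective (by rw [← hγ, hva]; rfl)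
  rwa [this]

lemma zero_mem_nsmul_L {Λ : Cut G} (h : (0 : G) ∈ Λ.L) :
    ∀ n : ℕ, (0 : G) ∈ (Cut.nsmul n Λ).L
  | 0 => le_refl (0 : G)
  | 1 => h
  | (n + 2) => ⟨0, zero_mem_nsmul_L h (n + 1), 0, h, by simp⟩

lemma le_zmul {Λ : Cut G} : Λ ≤ Cut.zmul Λ := by
  intro x hx
  exact Set.mem_iUnion.2 ⟨1, by simpa [Cut.zsmul, Cut.nsmul] using hx⟩

lemma add_zmul_le {Λ : Cut G} (h0 : (0 : G) ∈ Λ.L) :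
    Λ + Cut.zmul Λ ≤ Cut.zmul Λ := by
  rintro z ⟨l, hl, g, hg, hz⟩
  rcases Set.mem_iUnion.1 hg with ⟨n, hn⟩
  rcases lt_trichotomy n 0 with hneg | rfl | hpos
  · -- negative multiple: g < 0
    have hgle : g ≤ 0 := by
      rw [Cut.zsmul, if_neg (not_le.2 hneg)] at hn
      by_contra hgpos
      exact hn ((Cut.nsmul (-n).toNat Λ).lower (zero_mem_nsmul_L h0 _)
        (neg_nonpos.2 (lt_of_not_ge hgpos).le))
    exact le_zmul (Λ.lower hl (hz.trans (by simpa using add_le_add_left hgle l)))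
  · -- n = 0 : g ≤ 0
    have hgle : g ≤ 0 := by
      rw [Cut.zsmul, if_pos le_rfl] at hn
      exact hn
    exact le_zmul (Λ.lower hl (hz.trans (by simpa using add_le_add_left hgle l)))
  · -- n ≥ 1
    have hnn : (0 : ℤ) ≤ n := le_of_lt hpos
    rw [Cut.zsmul, if_pos hnn] at hn
    obtain ⟨m, hm⟩ : ∃ m : ℕ, n.toNat = m + 1 := by
      refine ⟨n.toNat - 1, ?_⟩
      omega
    rw [hm] at hn
    refine Set.mem_iUnion.2 ⟨(n + 1 : ℤ), ?_⟩
    have h1 : ((n + 1 : ℤ)).toNat = m + 2 := by omega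
    rw [Cut.zsmul, if_pos (by omega : (0:ℤ) ≤ n + 1), h1]
    show z ∈ (Cut.nsmul (m + 1) Λ + Λ).L
    exact ⟨g, hn, l, hl, by rw [add_comm]; exact hz⟩

/-- `1 ∈ A[0⁺]`. -/
lemma TowerBase.one_mem_A (T : TowerBase S) : (1 : K) ∈ T.A (Cut.rcut 0) := by
  have ht0 : S.t 0 ≠ 0 := by
    intro h
    have := S.v_t 0
    rw [h, (S.v_eq_top 0).2 rfl] at this
    exact (WithTop.coe_ne_top (a := (0 : G))) this.symm
  have hsq : S.t 0 * S.t 0 = 1 := by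
    have h := S.t_neg 0
    rw [neg_zero] at h
    nth_rewrite 2 [h]
    exact mul_inv_cancel₀ ht0
  have hk : S.t 0 ∈ S.k := by
    rcases mul_self_eq_one_iff.1 hsq with h | h
    · rw [h]; exact S.k.one_mem
    · rw [h]; exact S.k.neg_mem S.k.one_mem
  have := T.sec_mem 0 (S.t 0) hk
  rwa [hsq] at this

end Aux

/-- Let `K` be a valued field with a tower of complements `(A[Λ])`,
and let `a ∈ K` with `v(a) = 0`, `a ≠ 0`.  Set `Λ := ℤ·μ(a) = sup_n n·μ(a)`.
Then `μ(1/a) ≤ Λ`, i.e. `1/a ∈ A[Λ]`. -/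
theorem inverse_mem_zmul {K : Type u} {G : Type v}
    [Field K] [AddCommGroup G] [LinearOrder G] [IsOrderedAddMonoid G]
    (S : VData K G) (T : Tower S) (a : K) (ha : a ≠ 0)
    (hva : S.v a = (0 : WithTop G)) :
    T.toTowerBase.muInf a⁻¹ ≤ Cut.zmul (T.toTowerBase.muInf a) ∧
    a⁻¹ ∈ T.A (Cut.zmul (T.toTowerBase.muInf a)) := by
  set Λ := T.toTowerBase.muInf a with hΛ
  set M := Cut.zmul Λ with hM
  have h0 : (0 : G) ∈ Λ.L := zero_mem_muInf_L T.toTowerBase ha hva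
  have haΛ : a ∈ T.A Λ := T.toTowerBase.mem_A_muInf a
  have hadd : Λ + M ≤ M := add_zmul_le h0
  have h1M : (1 : K) ∈ T.A M := by
    have hle : Cut.rcut (0 : G) ≤ M := by
      refine le_trans ?_ (le_zmul (Λ := Λ))
      intro x hx
      exact Λ.lower h0 hx
    exact (T.toTowerBase.mono _ _).1 hle T.toTowerBase.one_mem_A
  obtain ⟨b, hb, ε, hε, heq⟩ := T.toTowerBase.spans M a⁻¹
  have hεz : ε = 0 := by
    by_contra hε0
    have hvε : S.v ε ≠ ⊤ := fun h => hε0 ((S.v_eq_top ε).1 h)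
    obtain ⟨e, he⟩ : ∃ e : G, S.v ε = (e : WithTop G) := by
      rcases WithTop.ne_top_iff_exists.1 hvε with ⟨e, he⟩
      exact ⟨e, he.symm⟩
    have heM : e ∉ M.L := hε e he
    have habM : a * b ∈ T.A M :=
      (T.toTowerBase.mono _ _).1 hadd (T.mul_mem Λ M a haΛ b hb)
    have haε : a * ε = 1 - a * b := by
      have h1 : a * a⁻¹ = 1 := mul_inv_cancel₀ ha
      rw [heq, mul_add] at h1
      linear_combination h1
    have haεA : a * ε ∈ T.A M := by
      rw [haε]
      exact T.toTowerBase.sub_mem M h1M habM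
    have haεO : a * ε ∈ S.Oc M := by
      intro γ hγ
      have hv : S.v (a * ε) = (e : WithTop G) := by
        rw [S.v_mul, hva, he, zero_add]
      have : γ = e := WithTop.coe_injective (by rw [← hγ, hv])
      rwa [this]
    have := T.toTowerBase.disj M (a * ε) haεA haεO
    exact hε0 (by
      rcases mul_eq_zero.1 this with h | h
      · exact absurd h ha
      · exact h)
  rw [hεz, add_zero] at heq
  have hmem : a⁻¹ ∈ T.A M := heq ▸ hb
  exact ⟨fun x hx => hx M hmem, hmem⟩
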